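/- (Relative-entropy cost of deviating from the fine-tuned eigenvalue conditions.) Let S be a nonempty finite set, θ ∈ (0,1], N > 0, and let λ, λ' : S → ℝ satisfy λ_n > 0 and λ'_n > 0 for all n, ∑_{n∈S} λ_n = ∑_{n∈S} λ'_n = N, and |λ'_n − λ_n| ≥ θ λ_n for every n ∈ S. Then ∑_{n∈S} λ'_n log(λ'_n/λ_n) ≥ N θ²/2. -/

import Mathlib

open Real

/-- auxiliary function for the derivative of the key function -/
noncomputable def gAux (t : ℝ) : ℝ := (t + 1) * Real.log t - 2 * (t - 1)

lemma gAux_hasDerivAt {t : ℝ} (ht : 0 < t) :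
    HasDerivAt gAux (Real.log t + 1 / t - 1) t := by
  have h1 : HasDerivAt (fun t : ℝ => (t + 1) * Real.log t)
      (1 * Real.log t + (t + 1) * t⁻¹) t :=
    ((hasDerivAt_id t).add_const 1).mul (Real.hasDerivAt_log ht.ne')
  have h2 : HasDerivAt (fun t : ℝ => 2 * (t - 1)) (2 * 1) t :=
    ((hasDerivAt_id t).sub_const 1).const_mul 2
  have := h1.sub h2
  refine this.congr_deriv ?_
  field_simp
  ring

lemma gAux_mono : MonotoneOn gAux (Set.Ioi 0) := by
  apply monotoneOn_of_deriv_nonneg (convex_Ioi 0)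
  · exact fun t ht => (gAux_hasDerivAt ht).continuousAt.continuousWithinAt
  · rw [interior_Ioi]
    exact fun t ht => ((gAux_hasDerivAt ht).differentiableAt).differentiableWithinAt
  · rw [interior_Ioi]
    intro t ht
    rw [(gAux_hasDerivAt ht).deriv]
    have := Real.one_sub_inv_le_log_of_pos ht
    have : 1 - 1 / t ≤ Real.log t := by rwa [one_div]
    linarith

lemma gAux_one : gAux 1 = 0 := by simp [gAux]

/-- the key function -/
noncomputable def hAux (t : ℝ) : ℝ :=
  (t + 2) * (t * Real.log t - t + 1) - 3 / 2 * (t - 1) ^ 2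

lemma hAux_hasDerivAt {t : ℝ} (ht : 0 < t) :
    HasDerivAt hAux (2 * gAux t) t := by
  have hlog : HasDerivAt (fun t : ℝ => t * Real.log t) (1 * Real.log t + t * t⁻¹) t :=
    (hasDerivAt_id t).mul (Real.hasDerivAt_log ht.ne')
  have hin : HasDerivAt (fun t : ℝ => t * Real.log t - t + 1)
      (1 * Real.log t + t * t⁻¹ - 1) t := (hlog.sub (hasDerivAt_id t)).add_const 1
  have h1 : HasDerivAt (fun t : ℝ => (t + 2) * (t * Real.log t - t + 1))
      (1 * (t * Real.log t - t + 1) + (t + 2) * (1 * Real.log t + t * t⁻¹ - 1)) t :=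
    ((hasDerivAt_id t).add_const 2).mul hin
  have h2 : HasDerivAt (fun t : ℝ => 3 / 2 * (t - 1) ^ 2)
      (3 / 2 * (2 * (t - 1) ^ 1 * 1)) t := by
    exact (((hasDerivAt_id t).sub_const 1).pow 2).const_mul (3 / 2)
  have := h1.sub h2
  refine this.congr_deriv ?_
  unfold gAux
  field_simp
  ring

lemma hAux_one : hAux 1 = 0 := by simp [hAux]

lemma hAux_cont : ContinuousOn hAux (Set.Ioi 0) :=
  fun t ht => (hAux_hasDerivAt ht).continuousAt.continuousWithinAt

lemma hAux_nonneg {t : ℝ} (ht : 0 < t) : 0 ≤ hAux t := by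
  rcases le_total t 1 with h1 | h1
  · -- antitone on Ioc 0 1
    have hanti : AntitoneOn hAux (Set.Ioc 0 1) := by
      apply antitoneOn_of_deriv_nonpos (convex_Ioc 0 1)
      · exact hAux_cont.mono Set.Ioc_subset_Ioi_self
      · rw [interior_Ioc]
        exact fun t ht => ((hAux_hasDerivAt ht.1).differentiableAt).differentiableWithinAt
      · rw [interior_Ioc]
        intro t ht
        rw [(hAux_hasDerivAt ht.1).deriv]
        have hg : gAux t ≤ gAux 1 := gAux_mono ht.1 (by norm_num) ht.2.le
        rw [gAux_one] at hg
        linarith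
    have := hanti ⟨ht, h1⟩ ⟨one_pos, le_refl 1⟩ h1
    rwa [hAux_one] at this
  · -- monotone on Ici 1
    have hmono : MonotoneOn hAux (Set.Ici 1) := by
      apply monotoneOn_of_deriv_nonneg (convex_Ici 1)
      · exact hAux_cont.mono fun x hx => Set.mem_Ioi.mpr (lt_of_lt_of_le one_pos hx)
      · rw [interior_Ici]
        exact fun t ht => ((hAux_hasDerivAt (lt_trans one_pos ht)).differentiableAt).differentiableWithinAt
      · rw [interior_Ici]
        intro t ht
        rw [(hAux_hasDerivAt (lt_trans one_pos ht)).deriv]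
        have hg : gAux 1 ≤ gAux t := gAux_mono (by norm_num) (Set.mem_Ioi.mpr (lt_trans one_pos ht)) ht.le
        rw [gAux_one] at hg
        linarith
    have := hmono (Set.self_mem_Ici) h1 h1
    rwa [hAux_one] at this

lemma key_ineq {t : ℝ} (ht : 0 < t) :
    3 / 2 * (t - 1) ^ 2 ≤ (t + 2) * (t * Real.log t - t + 1) := by
  have := hAux_nonneg ht
  unfold hAux at this
  linarith

/-- Relative-entropy cost of deviating from the fine-tuned eigenvalue
conditions: if all population ratios deviate from 1 by at least `θ`, the (unnormalised)
relative entropy on the subspace of total population `N` is at least `N θ²/2`. -/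
theorem relative_entropy_deviation_bound {α : Type*} [Fintype α] [Nonempty α]
    (θ N : ℝ) (hθ0 : 0 < θ) (hθ1 : θ ≤ 1) (hN : 0 < N)
    (lam lam' : α → ℝ) (hlam : ∀ n, 0 < lam n) (hlam' : ∀ n, 0 < lam' n)
    (hsum : ∑ n, lam n = N) (hsum' : ∑ n, lam' n = N)
    (hdev : ∀ n, θ * lam n ≤ |lam' n - lam n|) :
    N * θ ^ 2 / 2 ≤ ∑ n, lam' n * Real.log (lam' n / lam n) := by
  set KL : ℝ := ∑ n, lam' n * Real.log (lam' n / lam n) with hKL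
  set w : α → ℝ := fun n => lam' n + 2 * lam n with hw
  have hwpos : ∀ n, 0 < w n := fun n => by
    have := hlam n; have := hlam' n; simp only [hw]; linarith
  -- pointwise inequality
  have hpt : ∀ n, 3 / 2 * (lam' n - lam n) ^ 2 ≤
      w n * (lam' n * Real.log (lam' n / lam n) - lam' n + lam n) := by
    intro n
    have hl := hlam n; have hl' := hlam' n
    have hk := key_ineq (t := lam' n / lam n) (by positivity)
    have h2 := mul_le_mul_of_nonneg_right hk
      (le_of_lt (by positivity : (0:ℝ) < (lam n) ^ 2))
    have e1 : 3 / 2 * (lam' n / lam n - 1) ^ 2 * (lam n) ^ 2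
        = 3 / 2 * (lam' n - lam n) ^ 2 := by
      field_simp
    set L := Real.log (lam' n / lam n) with hL
    have e2 : (lam' n / lam n + 2) * (lam' n / lam n * L
          - lam' n / lam n + 1) * (lam n) ^ 2
        = w n * (lam' n * L - lam' n + lam n) := by
      simp only [hw]; field_simp
    rw [e1, e2] at h2
    exact h2
  -- sum of divided squares is ≤ (2/3) * KL
  have hdivsum : ∑ n, (lam' n - lam n) ^ 2 / w n ≤ 2 / 3 * KL := by
    have h1 : ∀ n : α, (lam' n - lam n) ^ 2 / w n
        ≤ 2 / 3 * (lam' n * Real.log (lam' n / lam n) - lam' n + lam n) := by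
      intro n
      rw [div_le_iff₀ (hwpos n)]
      have := hpt n
      nlinarith [hpt n]
    calc ∑ n, (lam' n - lam n) ^ 2 / w n
        ≤ ∑ n, 2 / 3 * (lam' n * Real.log (lam' n / lam n) - lam' n + lam n) :=
          Finset.sum_le_sum fun n _ => h1 n
      _ = 2 / 3 * KL := by
          rw [← Finset.mul_sum]
          congr 1
          have : ∑ n, (lam' n * Real.log (lam' n / lam n) - lam' n + lam n)
              = KL - (∑ n, lam' n) + ∑ n, lam n := by
            rw [hKL]
            simp [Finset.sum_add_distrib, Finset.sum_sub_distrib]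
          rw [this, hsum, hsum']
          ring
  -- total deviation
  have hdevsum : θ * N ≤ ∑ n, |lam' n - lam n| := by
    calc θ * N = ∑ n, θ * lam n := by rw [← Finset.mul_sum, hsum]
      _ ≤ ∑ n, |lam' n - lam n| := Finset.sum_le_sum fun n _ => hdev n
  have hwsum : ∑ n, w n = 3 * N := by
    simp only [hw]
    rw [Finset.sum_add_distrib, ← Finset.mul_sum, hsum, hsum']
    ring
  -- Sedrakyan / Cauchy-Schwarz
  have hCS := Finset.sq_sum_div_le_sum_sq_div Finset.univ
      (fun n => |lam' n - lam n|) (fun n _ => hwpos n)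
  simp only [sq_abs] at hCS
  rw [hwsum] at hCS
  have hA : (θ * N) ^ 2 ≤ (∑ n, |lam' n - lam n|) ^ 2 := by
    apply pow_le_pow_left₀ (by positivity) hdevsum
  have h3N : (0:ℝ) < 3 * N := by linarith
  have hchain : (θ * N) ^ 2 / (3 * N) ≤ 2 / 3 * KL :=
    le_trans (div_le_div_of_nonneg_right hA h3N.le |>.trans hCS) hdivsum
  rw [div_le_iff₀ h3N] at hchain
  nlinarith [hchain]
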